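/- For k > ℓ, the set Q_k = {q : X → ℝ : ∑ q(x_i) = 1, d_{χ²}(q,p) ≤ δ, q(x_i) = 0 for i > k} is nonempty if and only if m_k·δ - (1 - m_k) ≥ 0, equivalently δ ≥ (1-m_k)/m_k. -/

import Mathlib

open Finset

/-- For `k > ℓ`, the set `Q_k` is nonempty iff `m_k·δ - (1 - m_k) ≥ 0`, iff
`δ ≥ (1 - m_k)/m_k`. -/
theorem chi2_Qk_nonempty_iff
    (n : ℕ) (hn : 0 < n) (f p : Fin n → ℝ) (hf : Monotone f)
    (hp0 : ∀ i, 0 < p i) (hp1 : ∑ i, p i = 1)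
    (δ : ℝ) (hδ : 0 ≤ δ)
    (ℓ : Fin n) (hℓ : f ℓ = f ⟨0, hn⟩)
    (hℓmax : ∀ i, f i = f ⟨0, hn⟩ → i ≤ ℓ)
    (k : Fin n) (hk : ℓ < k) :
    let m : ℝ := ∑ i ∈ Finset.Iic k, p i
    let Qk : Set (Fin n → ℝ) :=
      {q | ∑ i, q i = 1 ∧ ∑ i, (q i - p i) ^ 2 / p i ≤ δ ∧ ∀ i, k < i → q i = 0}
    (Qk.Nonempty ↔ 0 ≤ m * δ - (1 - m)) ∧
      (0 ≤ m * δ - (1 - m) ↔ (1 - m) / m ≤ δ) := by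
  intro m Qk
  have hm0 : 0 < m := Finset.sum_pos (fun i _ => hp0 i) ⟨k, Finset.mem_Iic.2 le_rfl⟩
  have hsplit : ∀ F : Fin n → ℝ,
      ∑ i, F i = ∑ i ∈ Finset.Iic k, F i + ∑ i ∈ (Finset.Iic k)ᶜ, F i :=
    fun F => (Finset.sum_add_sum_compl _ _).symm
  have hcompl : ∀ i : Fin n, i ∈ (Finset.Iic k)ᶜ ↔ k < i := by
    intro i; simp [Finset.mem_compl, not_le]
  have hmc : ∑ i ∈ (Finset.Iic k)ᶜ, p i = 1 - m := by
    have := hsplit p; rw [hp1] at this; linarith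
  have hm1 : m ≤ 1 := by
    have h0 : 0 ≤ ∑ i ∈ (Finset.Iic k)ᶜ, p i :=
      Finset.sum_nonneg fun i _ => (hp0 i).le
    rw [hmc] at h0; linarith
  have iff2 : (0 ≤ m * δ - (1 - m)) ↔ ((1 - m) / m ≤ δ) := by
    rw [div_le_iff₀ hm0]; constructor <;> intro h <;> nlinarith
  refine ⟨?_, iff2⟩
  rw [iff2]
  constructor
  · rintro ⟨q, hq1, hq2, hq3⟩
    have hzero : ∀ i ∈ (Finset.Iic k)ᶜ, q i = 0 :=
      fun i hi => hq3 i ((hcompl i).1 hi)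
    have hsumq : ∑ i ∈ Finset.Iic k, q i = 1 := by
      have := hsplit q
      rw [hq1, Finset.sum_eq_zero hzero] at this; linarith
    have hA : (1 - m) ^ 2 / m ≤ ∑ i ∈ Finset.Iic k, (q i - p i) ^ 2 / p i := by
      have := Finset.sq_sum_div_le_sum_sq_div (Finset.Iic k) (fun i => q i - p i)
        (fun i _ => hp0 i)
      simpa [Finset.sum_sub_distrib, hsumq] using this
    have hB : ∑ i ∈ (Finset.Iic k)ᶜ, (q i - p i) ^ 2 / p i = 1 - m := by
      rw [← hmc]
      refine Finset.sum_congr rfl fun i hi => ?_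
      rw [hzero i hi, zero_sub, neg_sq, sq, mul_div_assoc, div_self (hp0 i).ne', mul_one]
    have htot := hsplit (fun i => (q i - p i) ^ 2 / p i)
    rw [hB] at htot
    have : (1 - m) ^ 2 / m + (1 - m) ≤ δ := by
      rw [htot] at hq2; linarith
    have heq : (1 - m) ^ 2 / m + (1 - m) = (1 - m) / m := by
      field_simp; ring
    linarith [heq ▸ this]
  · intro h
    refine ⟨fun i => if i ≤ k then p i / m else 0, ?_, ?_, ?_⟩
    · have hfil : Finset.univ.filter (fun i : Fin n => i ≤ k) = Finset.Iic k := by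
        ext i; simp
      rw [← Finset.sum_filter, hfil, ← Finset.sum_div]
      field_simp
      rfl
    · have hA : ∑ i ∈ Finset.Iic k, ((if i ≤ k then p i / m else 0) - p i) ^ 2 / p i
          = (1 - m) ^ 2 / m := by
        have : ∀ i ∈ Finset.Iic k,
            ((if i ≤ k then p i / m else 0) - p i) ^ 2 / p i
            = p i * ((1 - m) / m) ^ 2 := by
          intro i hi
          rw [if_pos (Finset.mem_Iic.1 hi)]
          have hpi := (hp0 i).ne'
          field_simp
        rw [Finset.sum_congr rfl this, ← Finset.sum_mul]
        have hmne := hm0.ne'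
        field_simp
        ring
      have hB : ∑ i ∈ (Finset.Iic k)ᶜ, ((if i ≤ k then p i / m else 0) - p i) ^ 2 / p i
          = 1 - m := by
        rw [← hmc]
        refine Finset.sum_congr rfl fun i hi => ?_
        rw [if_neg (not_le.2 ((hcompl i).1 hi)), zero_sub, neg_sq, sq, mul_div_assoc,
          div_self (hp0 i).ne', mul_one]
      rw [hsplit, hA, hB]
      have heq : (1 - m) ^ 2 / m + (1 - m) = (1 - m) / m := by
        field_simp; ring
      linarith
    · intro i hi
      simp only [not_le.2 hi, if_false]
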